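/- Let p ≥ 1 be an integer, let ω = exp(2πi/p) ∈ ℂ, and let u be an integer with 0 ≤ u ≤ p−1. Then (1/p) · Σ_{j=1}^{p−1} ω^{ju}/(1−ω^{−j})² − (p−1)(p−2)/(24p) = 1/8 − (2u+2−p)²/(8p) (an equality of complex numbers, the right-hand side being a rational number viewed in ℂ). -/

import Mathlib

open Finset

private lemma dls_sum_id (n : ℕ) : ∑ k ∈ range n, (k:ℂ) = n*(n-1)/2 := by
  induction n with
  | zero => simp
  | succ n ih => rw [sum_range_succ, ih]; push_cast; ring

private lemma dls_sum_sq (n : ℕ) : ∑ k ∈ range n, (k:ℂ)^2 = n*(n-1)*(2*n-1)/6 := by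
  induction n with
  | zero => simp
  | succ n ih => rw [sum_range_succ, ih]; push_cast; ring

private lemma dls_geom0 (p : ℕ) (x : ℂ) (hx : x^p = 1) (h1 : x ≠ 1) :
    ∑ k ∈ range p, x^k = 0 := by
  rw [geom_sum_eq h1, hx]; simp

private lemma dls_geom1 (p : ℕ) (x : ℂ) (hx : x^p = 1) (h1 : x ≠ 1) :
    (x-1) * ∑ k ∈ range p, (k:ℂ) * x^k = p := by
  have key : ∀ k : ℕ, (x-1) * ((k:ℂ)*x^k)
      = ((((k+1:ℕ)):ℂ)*x^(k+1) - (k:ℂ)*x^k) - x * x^k := by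
    intro k; push_cast; ring
  rw [mul_sum, sum_congr rfl fun k _ => key k, sum_sub_distrib,
    sum_range_sub (fun k => (k:ℂ)*x^k), ← mul_sum, dls_geom0 p x hx h1]
  simp [hx]

private lemma dls_geom2 (p : ℕ) (x : ℂ) (hx : x^p = 1) (h1 : x ≠ 1) :
    (x-1)^2 * ∑ k ∈ range p, (k:ℂ)^2 * x^k = (p:ℂ)^2*(x-1) - 2*p*x := by
  have key : ∀ k : ℕ, (x-1) * ((k:ℂ)^2*x^k)
      = ((((k+1:ℕ)):ℂ)^2*x^(k+1) - (k:ℂ)^2*x^k) - (2*(k:ℂ)+1) * (x * x^k) := by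
    intro k; push_cast; ring
  have e1 := dls_geom1 p x hx h1
  have e0 := dls_geom0 p x hx h1
  have step : (x-1) * ∑ k ∈ range p, (k:ℂ)^2 * x^k
      = (p:ℂ)^2 - 2*x*∑ k ∈ range p, (k:ℂ)*x^k := by
    rw [mul_sum, sum_congr rfl fun k _ => key k, sum_sub_distrib,
      sum_range_sub (fun k => (k:ℂ)^2*x^k)]
    have h2 : ∑ k ∈ range p, (2*(k:ℂ)+1)*(x*x^k)
        = 2*x*(∑ k ∈ range p, (k:ℂ)*x^k) + x * ∑ k ∈ range p, x^k := by
      rw [mul_sum, mul_sum, ← sum_add_distrib]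
      exact sum_congr rfl fun k _ => by ring
    rw [h2, e0, hx]
    push_cast
    ring
  calc (x-1)^2 * ∑ k ∈ range p, (k:ℂ)^2*x^k
      = (x-1) * ((x-1) * ∑ k ∈ range p, (k:ℂ)^2*x^k) := by ring
    _ = (x-1) * ((p:ℂ)^2 - 2*x*∑ k ∈ range p, (k:ℂ)*x^k) := by rw [step]
    _ = (p:ℂ)^2*(x-1) - 2*x*((x-1) * ∑ k ∈ range p, (k:ℂ)*x^k) := by ring
    _ = (p:ℂ)^2*(x-1) - 2*p*x := by rw [e1]; ring

private lemma dls_inv_sq_expand (p : ℕ) (x : ℂ) (hp : (p:ℂ) ≠ 0) (hx : x^p = 1)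
    (h1 : x ≠ 1) :
    1/(1-x)^2 = ∑ k ∈ range p, (((p:ℂ)-2)*(k:ℂ) - (k:ℂ)^2)/(2*(p:ℂ)) * x^k := by
  have hd : (1:ℂ) - x ≠ 0 := sub_ne_zero.mpr (Ne.symm h1)
  have e1 := dls_geom1 p x hx h1
  have e2 := dls_geom2 p x hx h1
  have hsum : ∑ k ∈ range p, (((p:ℂ)-2)*(k:ℂ) - (k:ℂ)^2)/(2*(p:ℂ)) * x^k
      = (((p:ℂ)-2) * ∑ k ∈ range p, (k:ℂ)*x^k
          - ∑ k ∈ range p, (k:ℂ)^2*x^k)/(2*(p:ℂ)) := by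
    rw [mul_sum, ← sum_sub_distrib, sum_div]
    exact sum_congr rfl fun k _ => by ring
  rw [hsum, div_eq_div_iff (pow_ne_zero 2 hd) (by
    exact mul_ne_zero two_ne_zero hp)]
  linear_combination e2 - (((p:ℂ)-2)*(x-1))*e1

/-- For `p ≥ 1`, `ω = exp(2πi/p)` and `0 ≤ u ≤ p-1`:
`(1/p) ∑_{j=1}^{p-1} ω^{ju}/(1-ω^{-j})² - (p-1)(p-2)/(24p) = 1/8 - (2u+2-p)²/(8p)`. -/
theorem delta_lens_space (p : ℕ) (hp : 1 ≤ p) (ω : ℂ)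
    (hω : ω = Complex.exp (2 * Real.pi * Complex.I / p))
    (u : ℕ) (hu : u ≤ p - 1) :
    (1 / (p : ℂ)) * ∑ j ∈ Finset.Icc 1 (p - 1), ω ^ (j * u) / (1 - ω ^ (-(j : ℤ))) ^ 2 -
        ((p : ℂ) - 1) * ((p : ℂ) - 2) / (24 * (p : ℂ)) =
      1 / 8 - (2 * (u : ℂ) + 2 - (p : ℂ)) ^ 2 / (8 * (p : ℂ)) := by
  have hp0 : (p:ℂ) ≠ 0 := Nat.cast_ne_zero.mpr (by omega)
  have hω0 : ω ≠ 0 := by rw [hω]; exact Complex.exp_ne_zero _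
  have hprim : IsPrimitiveRoot ω p := by
    rw [hω]; exact Complex.isPrimitiveRoot_exp p (by omega)
  have hup : u < p := by omega
  -- Step 1: expand each term as a sum over k
  have step1 : ∀ j ∈ Finset.Icc 1 (p-1),
      ω ^ (j*u) / (1 - ω ^ (-(j:ℤ)))^2
        = ∑ k ∈ range p, (((p:ℂ)-2)*(k:ℂ) - (k:ℂ)^2)/(2*(p:ℂ))
            * ω ^ ((j:ℤ) * ((u:ℤ) - (k:ℤ))) := by
    intro j hj
    obtain ⟨hj1, hj2⟩ := Finset.mem_Icc.mp hj
    have hxp : (ω ^ (-(j:ℤ)))^p = 1 := by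
      rw [← zpow_natCast (ω ^ (-(j:ℤ))) p, ← zpow_mul]
      exact (hprim.zpow_eq_one_iff_dvd _).mpr ⟨-(j:ℤ), by ring⟩
    have hx1 : ω ^ (-(j:ℤ)) ≠ 1 := by
      intro h
      have hd := (hprim.zpow_eq_one_iff_dvd _).mp h
      rw [Int.dvd_neg] at hd
      have hle := Int.le_of_dvd (by exact_mod_cast Nat.lt_of_lt_of_le Nat.zero_lt_one hj1) hd
      have : p ≤ j := by exact_mod_cast hle
      omega
    rw [div_eq_mul_one_div, dls_inv_sq_expand p _ hp0 hxp hx1, mul_sum]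
    refine sum_congr rfl fun k _ => ?_
    calc ω ^ (j*u) * ((((p:ℂ)-2)*(k:ℂ) - (k:ℂ)^2)/(2*(p:ℂ)) * (ω ^ (-(j:ℤ)))^k)
        = (((p:ℂ)-2)*(k:ℂ) - (k:ℂ)^2)/(2*(p:ℂ))
            * (ω ^ ((j*u:ℕ):ℤ) * (ω ^ (-(j:ℤ)))^(k:ℕ)) := by
          rw [zpow_natCast]; ring
      _ = (((p:ℂ)-2)*(k:ℂ) - (k:ℂ)^2)/(2*(p:ℂ))
            * ω ^ (((j*u:ℕ):ℤ) + (-(j:ℤ))*(k:ℤ)) := by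
          rw [← zpow_natCast (ω ^ (-(j:ℤ))) k, ← zpow_mul, ← zpow_add₀ hω0]
      _ = (((p:ℂ)-2)*(k:ℂ) - (k:ℂ)^2)/(2*(p:ℂ)) * ω ^ ((j:ℤ) * ((u:ℤ) - (k:ℤ))) := by
          rw [show (((j*u:ℕ):ℤ) + (-(j:ℤ))*(k:ℤ)) = (j:ℤ)*((u:ℤ)-(k:ℤ)) by push_cast; ring]
  -- Step 2: evaluate the inner geometric sums
  have step3 : ∀ k ∈ range p, ∑ j ∈ Finset.Icc 1 (p-1), ω ^ ((j:ℤ)*((u:ℤ)-(k:ℤ)))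
      = (if k = u then (p:ℂ) else 0) - 1 := by
    intro k hk
    have hk' : k < p := mem_range.mp hk
    set m : ℤ := (u:ℤ) - (k:ℤ) with hm
    have hterm : ∀ j : ℕ, ω ^ ((j:ℤ)*m) = (ω^m)^j := by
      intro j; rw [← zpow_natCast (ω^m) j, ← zpow_mul, mul_comm]
    have hrange : ∑ j ∈ range p, (ω^m)^j = (if k = u then (p:ℂ) else 0) := by
      rcases eq_or_ne k u with h|h
      · subst h
        simp [hm]
      · have hm0 : m ≠ 0 := by simp [hm]; omega
        have hy1 : ω^m ≠ 1 := by
          intro hy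
          have hd := (hprim.zpow_eq_one_iff_dvd _).mp hy
          have : m = 0 := Int.eq_zero_of_abs_lt_dvd hd (by
            rw [abs_lt]; constructor <;> [skip; skip] <;> simp [hm] <;> omega)
          exact hm0 this
        have hyp : (ω^m)^p = 1 := by
          rw [← zpow_natCast (ω^m) p, ← zpow_mul, mul_comm, zpow_mul, zpow_natCast,
            hprim.pow_eq_one, one_zpow]
        rw [geom_sum_eq hy1, hyp]
        simp [h]
    have hsplit : ∑ j ∈ range p, (ω^m)^j = 1 + ∑ j ∈ Finset.Icc 1 (p-1), (ω^m)^j := by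
      have hico : Finset.Ico 1 p = Finset.Icc 1 (p-1) := by
        rw [← Finset.Ico_add_one_right_eq_Icc]; congr 1; omega
      rw [range_eq_Ico, Finset.sum_eq_sum_Ico_succ_bot (by omega : 0 < p), hico, pow_zero]
    have : ∑ j ∈ Finset.Icc 1 (p-1), (ω^m)^j = (if k = u then (p:ℂ) else 0) - 1 := by
      rw [← hrange, hsplit]; ring
    rw [← this]
    exact sum_congr rfl fun j _ => hterm j
  -- Assemble
  rw [sum_congr rfl step1, Finset.sum_comm, sum_congr rfl (fun k hk => by
    rw [← mul_sum, step3 k hk])]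
  have hA := dls_sum_id p
  have hB := dls_sum_sq p
  have hexp : ∑ k ∈ range p,
      (((p:ℂ)-2)*(k:ℂ) - (k:ℂ)^2)/(2*(p:ℂ)) * ((if k = u then (p:ℂ) else 0) - 1)
      = (((p:ℂ)-2)*(u:ℂ) - (u:ℂ)^2)/(2*(p:ℂ)) * (p:ℂ)
        - (((p:ℂ)-2) * ((p:ℂ)*((p:ℂ)-1)/2) - (p:ℂ)*((p:ℂ)-1)*(2*(p:ℂ)-1)/6)/(2*(p:ℂ)) := by
    have split : ∀ k ∈ range p,
        (((p:ℂ)-2)*(k:ℂ) - (k:ℂ)^2)/(2*(p:ℂ)) * ((if k = u then (p:ℂ) else 0) - 1)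
        = (if k = u then (((p:ℂ)-2)*(k:ℂ) - (k:ℂ)^2)/(2*(p:ℂ)) * (p:ℂ) else 0)
          - (((p:ℂ)-2)*(k:ℂ) - (k:ℂ)^2)/(2*(p:ℂ)) := by
      intro k _
      rcases eq_or_ne k u with h|h <;> simp [h] <;> ring
    rw [sum_congr rfl split, sum_sub_distrib, Finset.sum_ite_eq' (range p) u
      (fun k => (((p:ℂ)-2)*(k:ℂ) - (k:ℂ)^2)/(2*(p:ℂ)) * (p:ℂ)), if_pos (mem_range.mpr hup)]
    congr 1
    have : ∑ k ∈ range p, (((p:ℂ)-2)*(k:ℂ) - (k:ℂ)^2)/(2*(p:ℂ))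
        = (((p:ℂ)-2) * ∑ k ∈ range p, (k:ℂ) - ∑ k ∈ range p, (k:ℂ)^2)/(2*(p:ℂ)) := by
      rw [mul_sum, ← sum_sub_distrib, sum_div]
    rw [this, hA, hB]
  have hexp2 : ∑ k ∈ range p,
      (((p:ℂ)-2)*(k:ℂ) - (k:ℂ)^2)/(2*(p:ℂ)) * ((if k = u then (p:ℂ) else 0) - 1)
      = (6*((p:ℂ)-2)*(u:ℂ) - 6*(u:ℂ)^2 - ((p:ℂ)-1)*((p:ℂ)-5))/12 := by
    rw [hexp]
    field_simp
    ring
  rw [hexp2]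
  field_simp
  ring
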